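/- arXiv:1904.02266 — 8 statements merged into one kernel-verified Lean document; each statement's English description precedes it below -/
import Mathlib

section
/- Let ω̂ be a real n×n skew-symmetric matrix, v ∈ ℝⁿ, and ξ = [[ω̂,v],[0,0]] ∈ se(n). For t ∈ ℝ and z ∈ ℝⁿ, let A(t)z ∈ ℝⁿ denote the first n coordinates of exp(−tξ)·(z,1). Define G(t) = Σ_{i∈ι, j∈κ} c(i,j) · σ²·exp(−‖x_i − A(t)z_j‖²/(2ℓ²)). Then G is differentiable at t = 0 with derivative G′(0) = Σ_{i∈ι, j∈κ} c(i,j) · (1/ℓ²) · σ²·exp(−‖x_i − z_j‖²/(2ℓ²)) · ⟨z_j − x_i, ω̂z_j + v⟩. (This is the differential dF_e(ξ) of the alignment functional at the identity.) -/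
open Matrix

/-- The canonical identification of a plain vector `Fin n → ℝ` with a point of
Euclidean space `ℝⁿ`. -/
def toEuc {n : ℕ} (f : Fin n → ℝ) : EuclideanSpace ℝ (Fin n) := WithLp.toLp 2 f

noncomputable def coordMap (n : ℕ) (w : (Fin n ⊕ Fin 1) → ℝ) :
    Matrix (Fin n ⊕ Fin 1) (Fin n ⊕ Fin 1) ℝ →ₗ[ℝ] EuclideanSpace ℝ (Fin n) where
  toFun A := toEuc (fun idx => A.mulVec w (Sum.inl idx))
  map_add' A B := by
    ext idx
    simp [toEuc, Matrix.add_mulVec]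
  map_smul' c A := by
    ext idx
    simp [toEuc, Matrix.smul_mulVec]

/-- With `ξ = [[ω̂,v],[0,0]] ∈ se(n)` and `A(t)z` the first `n` coordinates of
`exp(−tξ)·(z,1)`, the alignment functional
`G(t) = Σ_{i,j} c(i,j) · σ²·exp(−‖xᵢ − A(t)zⱼ‖²/(2ℓ²))` is differentiable at `t = 0` with
`G′(0) = Σ_{i,j} c(i,j) · (1/ℓ²) · σ²·exp(−‖xᵢ − zⱼ‖²/(2ℓ²)) · ⟨zⱼ − xᵢ, ω̂zⱼ + v⟩`. -/
theorem alignment_functional_differential_at_identity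
    (n : ℕ) (ι κ : Type) [Fintype ι] [Fintype κ]
    (I : Type) [NormedAddCommGroup I] [InnerProductSpace ℝ I]
    (x : ι → EuclideanSpace ℝ (Fin n)) (z : κ → EuclideanSpace ℝ (Fin n))
    (ℓX : ι → I) (ℓZ : κ → I)
    (σ ℓ : ℝ) (hσ : 0 < σ) (hℓ : 0 < ℓ)
    (ω : Matrix (Fin n) (Fin n) ℝ) (hω : ωᵀ = -ω) (v : EuclideanSpace ℝ (Fin n)) :
    HasDerivAt
      (fun t : ℝ => ∑ i : ι, ∑ j : κ,
        (inner ℝ (ℓX i) (ℓZ j) : ℝ) *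
          (σ ^ 2 * Real.exp (-‖x i -
            toEuc (fun idx : Fin n =>
              ((NormedSpace.exp
                  ((-t) • (Matrix.fromBlocks ω (Matrix.replicateCol (Fin 1) v) 0 0 :
                    Matrix (Fin n ⊕ Fin 1) (Fin n ⊕ Fin 1) ℝ))).mulVec
                (Sum.elim (z j) 1)) (Sum.inl idx : Fin n ⊕ Fin 1))‖ ^ 2 / (2 * ℓ ^ 2))))
      (∑ i : ι, ∑ j : κ,
        (inner ℝ (ℓX i) (ℓZ j) : ℝ) * ((1 / ℓ ^ 2) *
          (σ ^ 2 * Real.exp (-‖x i - z j‖ ^ 2 / (2 * ℓ ^ 2))) *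
          (inner ℝ (z j - x i) (toEuc (ω.mulVec (z j)) + v) : ℝ)))
      0 := by
  classical
  set M : Matrix (Fin n ⊕ Fin 1) (Fin n ⊕ Fin 1) ℝ :=
    Matrix.fromBlocks ω (Matrix.replicateCol (Fin 1) v) 0 0 with hM
  letI : SeminormedRing (Matrix (Fin n ⊕ Fin 1) (Fin n ⊕ Fin 1) ℝ) := Matrix.linftyOpSemiNormedRing
  letI : NormedRing (Matrix (Fin n ⊕ Fin 1) (Fin n ⊕ Fin 1) ℝ) := Matrix.linftyOpNormedRing
  letI : NormedAlgebra ℝ (Matrix (Fin n ⊕ Fin 1) (Fin n ⊕ Fin 1) ℝ) := Matrix.linftyOpNormedAlgebra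
  have hE : HasDerivAt (fun t : ℝ => NormedSpace.exp ((-t) • M)) (-M) 0 := by
    have h1 : HasDerivAt (fun u : ℝ => NormedSpace.exp (u • M)) M 0 := by
      have h := hasDerivAt_exp_smul_const (𝕂 := ℝ) M 0
      simp only [zero_smul, NormedSpace.exp_zero, one_mul] at h
      exact h
    have h2 : HasDerivAt (fun t : ℝ => -t) (-1 : ℝ) 0 := hasDerivAt_neg 0
    have h1' : HasDerivAt (fun u : ℝ => NormedSpace.exp (u • M)) M (-(0:ℝ)) := by
      simpa using h1
    have h3 := h1'.scomp (0:ℝ) h2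
    simp only [Function.comp_def, neg_smul, one_smul] at h3 ⊢
    exact h3
  -- the d vector
  apply HasDerivAt.fun_sum
  intro i _
  apply HasDerivAt.fun_sum
  intro j _
  set L := (coordMap n (Sum.elim (z j) 1)).toContinuousLinearMap with hL
  set d : EuclideanSpace ℝ (Fin n) := toEuc (ω.mulVec (z j)) + v with hd
  have hA : HasDerivAt (fun t : ℝ => L (NormedSpace.exp ((-t) • M))) (L (-M)) 0 :=
    L.hasFDerivAt.comp_hasDerivAt 0 hE
  have hLM : L (-M) = -d := by
    ext idx
    simp [hL, coordMap, toEuc, hd, hM, Matrix.neg_mulVec, Matrix.fromBlocks_mulVec,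
      Matrix.mulVec, Matrix.replicateCol, dotProduct, Fin.sum_univ_one]
    ring
  have hL1 : L (1 : Matrix (Fin n ⊕ Fin 1) (Fin n ⊕ Fin 1) ℝ) = z j := by
    ext idx
    simp [hL, coordMap, toEuc, Matrix.one_mulVec]
  have hsub : HasDerivAt (fun t : ℝ => x i - L (NormedSpace.exp ((-t) • M))) d 0 := by
    simpa [hLM] using (hasDerivAt_const (0:ℝ) (x i)).fun_sub hA
  have hnorm : HasDerivAt (fun t : ℝ => ‖x i - L (NormedSpace.exp ((-t) • M))‖ ^ 2)
      (2 * (inner ℝ (x i - z j) d : ℝ)) 0 := by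
    have h := hsub.inner (𝕜 := ℝ) hsub
    simp only [neg_zero, zero_smul, NormedSpace.exp_zero, hL1] at h
    have h2 : (inner ℝ (x i - z j) d : ℝ) + (inner ℝ d (x i - z j) : ℝ)
        = 2 * (inner ℝ (x i - z j) d : ℝ) := by
      rw [real_inner_comm d]; ring
    rw [h2] at h
    exact h.congr_of_eventuallyEq (Filter.Eventually.of_forall fun t =>
      (real_inner_self_eq_norm_sq _).symm)
  have hfinal := ((((hnorm.fun_neg).div_const (2 * ℓ ^ 2)).exp).const_mul (σ ^ 2)).const_mul
      ((inner ℝ (ℓX i) (ℓZ j) : ℝ))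
  simp only [neg_zero, zero_smul, NormedSpace.exp_zero, hL1] at hfinal
  have hkey : (inner ℝ (ℓX i) (ℓZ j) : ℝ) * ((1 / ℓ ^ 2) *
      (σ ^ 2 * Real.exp (-‖x i - z j‖ ^ 2 / (2 * ℓ ^ 2))) *
      (inner ℝ (z j - x i) (toEuc (ω.mulVec (z j)) + v) : ℝ))
      = (inner ℝ (ℓX i) (ℓZ j) : ℝ) * (σ ^ 2 * (Real.exp (-‖x i - z j‖ ^ 2 / (2 * ℓ ^ 2)) *
        (-(2 * (inner ℝ (x i - z j) d : ℝ)) / (2 * ℓ ^ 2)))) := by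
    have hxz : (inner ℝ (x i - z j) d : ℝ) = -(inner ℝ (z j - x i) d : ℝ) := by
      rw [← inner_neg_left, neg_sub]
    rw [hxz, hd]
    have hℓ2 : ℓ ^ 2 ≠ 0 := pow_ne_zero 2 hℓ.ne'
    field_simp
  rw [hkey]
  exact hfinal
end

section
/- Let R be a real n×n matrix with RᵀR = I, T ∈ ℝⁿ, and set z̃_j = Rᵀz_j − RᵀT for each j. Let ω̂ be a real n×n skew-symmetric matrix, v ∈ ℝⁿ, ξ = [[ω̂,v],[0,0]] ∈ se(n), and let h = [[R,T],[0,1]]. Define G(t) = Σ_{i∈ι, j∈κ} c(i,j) · σ²·exp(−‖x_i − B(t)z_j‖²/(2ℓ²)), where B(t)z_j ∈ ℝⁿ denotes the first n coordinates of (h·exp(tξ))⁻¹·(z_j,1). Then G is differentiable at t = 0 with derivative G′(0) = Σ_{i∈ι, j∈κ} c(i,j) · (1/ℓ²) · σ²·exp(−‖x_i − z̃_j‖²/(2ℓ²)) · ⟨z̃_j − x_i, ω̂z̃_j + v⟩. (This is the left-translated differential dF_h((ℓ_h)_*ξ) of the alignment functional at h ∈ SE(n).) -/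
open Matrix

/-- Derivative at `0` of a coordinate of `exp(tA) *ᵥ w`. -/
lemma expEntry_hasDerivAt {m : Type} [Fintype m] [DecidableEq m]
    (A : Matrix m m ℝ) (w : m → ℝ) (p : m) :
    HasDerivAt (fun t : ℝ => ((NormedSpace.exp (t • A)).mulVec w) p)
      ((A.mulVec w) p) 0 := by
  letI : SeminormedRing (Matrix m m ℝ) := Matrix.linftyOpSemiNormedRing
  letI : NormedRing (Matrix m m ℝ) := Matrix.linftyOpNormedRing
  letI : NormedAlgebra ℝ (Matrix m m ℝ) := Matrix.linftyOpNormedAlgebra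
  have hexp : HasDerivAt (fun t : ℝ => NormedSpace.exp (t • A)) A 0 := by
    have h0 := hasDerivAt_exp_smul_const A (0 : ℝ)
    simp only [zero_smul, NormedSpace.exp_zero, one_mul] at h0
    exact h0
  set L : Matrix m m ℝ →ₗ[ℝ] ℝ :=
    { toFun := fun M => M.mulVec w p
      map_add' := fun M N => by simp [Matrix.add_mulVec]
      map_smul' := fun c M => by simp [Matrix.smul_mulVec] }
  have hL := (LinearMap.toContinuousLinearMap L).hasFDerivAt
    (x := NormedSpace.exp ((0 : ℝ) • A))
  exact (hL.comp_hasDerivAt 0 hexp : )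

lemma euc_norm_sq {n : ℕ} (a : EuclideanSpace ℝ (Fin n)) : ‖a‖ ^ 2 = ∑ i, a i ^ 2 := by
  rw [EuclideanSpace.norm_eq, Real.sq_sqrt (by positivity)]
  simp [sq_abs]

lemma col_mulVec_one {n : ℕ} (u : Fin n → ℝ) :
    (Matrix.replicateCol (Fin 1) u) *ᵥ (1 : Fin 1 → ℝ) = u := by
  ext i; simp [Matrix.mulVec, dotProduct]

/-- Let `h = [[R,T],[0,1]] ∈ SE(n)` (with `RᵀR = I`), `ξ = [[ω̂,v],[0,0]] ∈ se(n)`,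
`z̃ⱼ = Rᵀzⱼ − RᵀT`, and let `B(t)zⱼ` be the first `n` coordinates of `(h·exp(tξ))⁻¹·(zⱼ,1)`.
Then `G(t) = Σ_{i,j} c(i,j)·σ²·exp(−‖xᵢ − B(t)zⱼ‖²/(2ℓ²))` is differentiable at `t = 0` with
`G′(0) = Σ_{i,j} c(i,j)·(1/ℓ²)·σ²·exp(−‖xᵢ − z̃ⱼ‖²/(2ℓ²))·⟨z̃ⱼ − xᵢ, ω̂z̃ⱼ + v⟩`
(the left-translated differential of the alignment functional at `h`). -/
theorem alignment_functional_differential_left_translated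
    (n : ℕ) (ι κ : Type) [Fintype ι] [Fintype κ]
    (I : Type) [NormedAddCommGroup I] [InnerProductSpace ℝ I]
    (x : ι → EuclideanSpace ℝ (Fin n)) (z : κ → EuclideanSpace ℝ (Fin n))
    (ℓX : ι → I) (ℓZ : κ → I)
    (σ ℓ : ℝ) (hσ : 0 < σ) (hℓ : 0 < ℓ)
    (R : Matrix (Fin n) (Fin n) ℝ) (hR : Rᵀ * R = 1) (T : EuclideanSpace ℝ (Fin n))
    (ω : Matrix (Fin n) (Fin n) ℝ) (hω : ωᵀ = -ω) (v : EuclideanSpace ℝ (Fin n)) :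
    HasDerivAt
      (fun t : ℝ => ∑ i : ι, ∑ j : κ,
        (inner ℝ (ℓX i) (ℓZ j) : ℝ) *
          (σ ^ 2 * Real.exp (-‖x i -
            toEuc (fun idx : Fin n =>
              ((((Matrix.fromBlocks R (Matrix.replicateCol (Fin 1) T) 0 1 :
                    Matrix (Fin n ⊕ Fin 1) (Fin n ⊕ Fin 1) ℝ) *
                  NormedSpace.exp
                    (t • (Matrix.fromBlocks ω (Matrix.replicateCol (Fin 1) v) 0 0 :
                      Matrix (Fin n ⊕ Fin 1) (Fin n ⊕ Fin 1) ℝ)))⁻¹).mulVec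
                (Sum.elim (z j) 1)) (Sum.inl idx : Fin n ⊕ Fin 1))‖ ^ 2 / (2 * ℓ ^ 2))))
      (∑ i : ι, ∑ j : κ,
        (inner ℝ (ℓX i) (ℓZ j) : ℝ) * ((1 / ℓ ^ 2) *
          (σ ^ 2 * Real.exp
            (-‖x i - (toEuc (Rᵀ.mulVec (z j)) - toEuc (Rᵀ.mulVec T))‖ ^ 2 / (2 * ℓ ^ 2))) *
          (inner ℝ ((toEuc (Rᵀ.mulVec (z j)) - toEuc (Rᵀ.mulVec T)) - x i)
            (toEuc (ω.mulVec (toEuc (Rᵀ.mulVec (z j)) - toEuc (Rᵀ.mulVec T))) + v) : ℝ)))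
      0 := by
  classical
  set ξ : Matrix (Fin n ⊕ Fin 1) (Fin n ⊕ Fin 1) ℝ :=
    Matrix.fromBlocks ω (Matrix.replicateCol (Fin 1) v) 0 0 with hξdef
  set h : Matrix (Fin n ⊕ Fin 1) (Fin n ⊕ Fin 1) ℝ :=
    Matrix.fromBlocks R (Matrix.replicateCol (Fin 1) T) 0 1 with hhdef
  -- the translated point cloud
  set zt : κ → Fin n → ℝ := fun j => Rᵀ *ᵥ (z j) - Rᵀ *ᵥ T with hztdef
  have hzt_apply : ∀ j idx, zt j idx = (Rᵀ *ᵥ (z j)) idx - (Rᵀ *ᵥ T) idx := fun _ _ => rfl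
  -- inverse of h
  have hinv : h⁻¹ = Matrix.fromBlocks Rᵀ (Matrix.replicateCol (Fin 1) (-(Rᵀ *ᵥ T))) 0 1 := by
    apply Matrix.inv_eq_left_inv
    rw [hhdef, Matrix.fromBlocks_multiply]
    simp [hR, ← Matrix.replicateCol_mulVec, ← Matrix.replicateCol_add, ← Matrix.fromBlocks_one]
  -- the key rewriting of the moving vector
  have hvec : ∀ (t : ℝ) (j : κ),
      ((h * NormedSpace.exp (t • ξ))⁻¹) *ᵥ Sum.elim (z j) 1
        = NormedSpace.exp (t • (-ξ)) *ᵥ Sum.elim (zt j) 1 := by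
    intro t j
    have hgv : h⁻¹ *ᵥ Sum.elim (z j) 1 = Sum.elim (zt j) 1 := by
      rw [hinv, Matrix.fromBlocks_mulVec]
      ext (idx | k)
      · simp [zt, Matrix.neg_mulVec, col_mulVec_one, sub_eq_add_neg]
      · simp [Matrix.one_mulVec, Matrix.zero_mulVec]
    rw [smul_neg, Matrix.exp_neg, Matrix.mul_inv_rev, ← Matrix.mulVec_mulVec, hgv]
  -- derivative of each coordinate
  have hcoord : ∀ (j : κ) (idx : Fin n),
      HasDerivAt (fun t : ℝ =>
          (NormedSpace.exp (t • (-ξ)) *ᵥ Sum.elim (zt j) 1) (Sum.inl idx))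
        (-((ω *ᵥ zt j) idx + v idx)) 0 := by
    intro j idx
    have := expEntry_hasDerivAt (-ξ) (Sum.elim (zt j) 1) (Sum.inl idx)
    convert this using 1
    rw [hξdef, Matrix.neg_mulVec, Matrix.fromBlocks_mulVec]
    simp [col_mulVec_one]
  -- value at zero of each coordinate
  have hcoord0 : ∀ (j : κ) (idx : Fin n),
      (NormedSpace.exp ((0 : ℝ) • (-ξ)) *ᵥ Sum.elim (zt j) 1) (Sum.inl idx) = zt j idx := by
    intro j idx
    simp [NormedSpace.exp_zero]
  -- per-term derivative
  have hterm : ∀ (i : ι) (j : κ),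
      HasDerivAt (fun t : ℝ =>
        (inner ℝ (ℓX i) (ℓZ j) : ℝ) *
          (σ ^ 2 * Real.exp (-‖x i -
            toEuc (fun idx : Fin n =>
              (((h * NormedSpace.exp (t • ξ))⁻¹).mulVec
                (Sum.elim (z j) 1)) (Sum.inl idx))‖ ^ 2 / (2 * ℓ ^ 2))))
        ((inner ℝ (ℓX i) (ℓZ j) : ℝ) * ((1 / ℓ ^ 2) *
          (σ ^ 2 * Real.exp
            (-‖x i - (toEuc (Rᵀ.mulVec (z j)) - toEuc (Rᵀ.mulVec T))‖ ^ 2 / (2 * ℓ ^ 2))) *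
          (inner ℝ ((toEuc (Rᵀ.mulVec (z j)) - toEuc (Rᵀ.mulVec T)) - x i)
            (toEuc (ω.mulVec (toEuc (Rᵀ.mulVec (z j)) - toEuc (Rᵀ.mulVec T))) + v) : ℝ))) 0 := by
    intro i j
    -- the squared distance function
    have hQ : HasDerivAt (fun t : ℝ => ∑ idx : Fin n,
        (x i idx - (NormedSpace.exp (t • (-ξ)) *ᵥ Sum.elim (zt j) 1) (Sum.inl idx)) ^ 2)
        (∑ idx : Fin n, 2 * (x i idx - zt j idx) * ((ω *ᵥ zt j) idx + v idx)) 0 := by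
      apply HasDerivAt.fun_sum
      intro idx _
      have h1 := ((hasDerivAt_const (0 : ℝ) (x i idx)).sub (hcoord j idx)).pow 2
      convert h1 using 1
      case e'_4 => rfl
      case e'_8 => rfl
      simp only [Pi.sub_apply, Nat.cast_ofNat, Nat.reduceSub]
      rw [hcoord0 j idx]
      ring
    have hQ2 := (((hQ.neg.div_const (2 * ℓ ^ 2)).exp.const_mul (σ ^ 2)).const_mul
      (inner ℝ (ℓX i) (ℓZ j) : ℝ))
    -- identify the function
    have hfun : (fun t : ℝ =>
        (inner ℝ (ℓX i) (ℓZ j) : ℝ) *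
          (σ ^ 2 * Real.exp (-‖x i -
            toEuc (fun idx : Fin n =>
              (((h * NormedSpace.exp (t • ξ))⁻¹).mulVec
                (Sum.elim (z j) 1)) (Sum.inl idx))‖ ^ 2 / (2 * ℓ ^ 2))))
        = (fun t : ℝ => (inner ℝ (ℓX i) (ℓZ j) : ℝ) * (σ ^ 2 * Real.exp
            (-(∑ idx : Fin n, (x i idx -
              (NormedSpace.exp (t • (-ξ)) *ᵥ Sum.elim (zt j) 1) (Sum.inl idx)) ^ 2)
              / (2 * ℓ ^ 2)))) := by
      funext t
      rw [hvec t j, euc_norm_sq]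
      congr 1
    rw [hfun]
    convert hQ2 using 1
    case e'_4 => rfl
    case e'_5 => rfl
    case e'_8 => rfl
    -- identify the derivative values
    have hnorm0 : ‖x i - (toEuc (Rᵀ.mulVec (z j)) - toEuc (Rᵀ.mulVec T))‖ ^ 2
        = ∑ idx : Fin n,
            (x i idx - (NormedSpace.exp ((0:ℝ) • (-ξ)) *ᵥ Sum.elim (zt j) 1) (Sum.inl idx)) ^ 2 := by
      rw [euc_norm_sq]
      refine Finset.sum_congr rfl fun idx _ => ?_
      rw [hcoord0 j idx]
      congr 1
    have hinner : (inner ℝ ((toEuc (Rᵀ.mulVec (z j)) - toEuc (Rᵀ.mulVec T)) - x i)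
          (toEuc (ω.mulVec (toEuc (Rᵀ.mulVec (z j)) - toEuc (Rᵀ.mulVec T))) + v) : ℝ)
        = ∑ idx : Fin n, (zt j idx - x i idx) * ((ω *ᵥ zt j) idx + v idx) := by
      simp only [PiLp.inner_apply, RCLike.inner_apply, conj_trivial]
      refine Finset.sum_congr rfl fun idx _ => ?_
      refine (mul_comm _ _).trans ?_
      congr 1
    have hP : (∑ idx : Fin n, 2 * (x i idx - zt j idx) * ((ω *ᵥ zt j) idx + v idx))
        = (-2) * ∑ idx : Fin n, (zt j idx - x i idx) * ((ω *ᵥ zt j) idx + v idx) := by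
      rw [Finset.mul_sum]
      exact Finset.sum_congr rfl fun idx _ => by ring
    simp only [Pi.neg_apply]
    rw [hinner, hnorm0, hP]
    have hℓ2 : (ℓ : ℝ) ^ 2 ≠ 0 := by positivity
    field_simp
  -- assemble
  refine HasDerivAt.fun_sum fun i _ => HasDerivAt.fun_sum fun j _ => ?_
  exact hterm i j
end

section
/- Let M be a set, I a real inner product space, and k : M × M → ℝ a symmetric kernel that is labeled-positive-semidefinite. Then for any finite families (x_i, a_i)_{i∈ι} and (z_j, b_j)_{j∈κ} in M × I, the Cauchy–Schwarz inequality holds: (Σ_{i,j} ⟨a_i, b_j⟩ k(x_i, z_j))² ≤ (Σ_{i,i′} ⟨a_i, a_{i′}⟩ k(x_i, x_{i′})) · (Σ_{j,j′} ⟨b_j, b_{j′}⟩ k(z_j, z_{j′})). -/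
/-- A symmetric kernel `k : M → M → ℝ` is labeled-positive-semidefinite with respect to labels
in a real inner product space `I` if for every finite family of points `pᵢ ∈ M` and labels
`aᵢ ∈ I`, one has `Σ_{i,j} ⟨aᵢ, aⱼ⟩ k(pᵢ, pⱼ) ≥ 0`. -/
def LabeledPSD {M : Type} (I : Type) [NormedAddCommGroup I] [InnerProductSpace ℝ I]
    (k : M → M → ℝ) : Prop :=
  ∀ (ι : Type) (_ : Fintype ι) (p : ι → M) (a : ι → I),
    0 ≤ ∑ i : ι, ∑ j : ι, (inner ℝ (a i) (a j) : ℝ) * k (p i) (p j)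

/-- For a symmetric, labeled-positive-semidefinite kernel `k` on `M` and finite
labeled families `(xᵢ, aᵢ)` and `(zⱼ, bⱼ)`, the Cauchy–Schwarz inequality holds:
`(Σ_{i,j} ⟨aᵢ,bⱼ⟩ k(xᵢ,zⱼ))² ≤ (Σ_{i,i′} ⟨aᵢ,aᵢ′⟩ k(xᵢ,xᵢ′)) · (Σ_{j,j′} ⟨bⱼ,bⱼ′⟩ k(zⱼ,zⱼ′))`. -/
theorem labeled_kernel_cauchy_schwarz
    {M : Type} (I : Type) [NormedAddCommGroup I] [InnerProductSpace ℝ I]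
    (k : M → M → ℝ) (hsymm : ∀ x y, k x y = k y x) (hpsd : LabeledPSD I k)
    (ι κ : Type) [Fintype ι] [Fintype κ]
    (x : ι → M) (a : ι → I) (z : κ → M) (b : κ → I) :
    (∑ i : ι, ∑ j : κ, (inner ℝ (a i) (b j) : ℝ) * k (x i) (z j)) ^ 2 ≤
      (∑ i : ι, ∑ i' : ι, (inner ℝ (a i) (a i') : ℝ) * k (x i) (x i')) *
        (∑ j : κ, ∑ j' : κ, (inner ℝ (b j) (b j') : ℝ) * k (z j) (z j')) := by
  set A := ∑ i : ι, ∑ i' : ι, (inner ℝ (a i) (a i') : ℝ) * k (x i) (x i') with hA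
  set B := ∑ j : κ, ∑ j' : κ, (inner ℝ (b j) (b j') : ℝ) * k (z j) (z j') with hB
  set C := ∑ i : ι, ∑ j : κ, (inner ℝ (a i) (b j) : ℝ) * k (x i) (z j) with hC
  have swap : (∑ j : κ, ∑ i : ι, (inner ℝ (b j) (a i) : ℝ) * k (z j) (x i)) = C := by
    rw [hC, Finset.sum_comm]
    exact Finset.sum_congr rfl fun i _ => Finset.sum_congr rfl fun j _ => by
      rw [real_inner_comm, hsymm]
  have key : ∀ t : ℝ, 0 ≤ A * (t * t) + (2 * C) * t + B := by
    intro t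
    have h := hpsd (ι ⊕ κ) inferInstance (Sum.elim x z) (Sum.elim (t • a) b)
    simp only [Fintype.sum_sum_type, Sum.elim_inl, Sum.elim_inr, Pi.smul_apply,
      real_inner_smul_left, real_inner_smul_right, Finset.sum_add_distrib] at h
    have e11 : (∑ i : ι, ∑ j : ι, t * (t * (inner ℝ (a i) (a j) : ℝ)) * k (x i) (x j))
        = A * (t * t) := by
      rw [hA, Finset.sum_mul]
      exact Finset.sum_congr rfl fun i _ => by
        rw [Finset.sum_mul]
        exact Finset.sum_congr rfl fun j _ => by ring
    have e12 : (∑ i : ι, ∑ j : κ, t * (inner ℝ (a i) (b j) : ℝ) * k (x i) (z j))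
        = C * t := by
      rw [hC, Finset.sum_mul]
      exact Finset.sum_congr rfl fun i _ => by
        rw [Finset.sum_mul]
        exact Finset.sum_congr rfl fun j _ => by ring
    have e21 : (∑ j : κ, ∑ i : ι, t * (inner ℝ (b j) (a i) : ℝ) * k (z j) (x i))
        = C * t := by
      rw [← swap, Finset.sum_mul]
      exact Finset.sum_congr rfl fun j _ => by
        rw [Finset.sum_mul]
        exact Finset.sum_congr rfl fun i _ => by ring
    linarith [h, e11, e12, e21]
  have hd := discrim_le_zero key
  rw [discrim] at hd
  nlinarith [hd]
end

section
/- Let G be a group acting on a set M, I a real inner product space, and k : M × M → ℝ a symmetric, labeled-positive-semidefinite kernel that is invariant under the action: k(g·x, g·y) = k(x, y) for all g ∈ G and x, y ∈ M. Given a finite family (x_i, a_i)_{i∈ι} in M × I, define F(h) = Σ_{i,j} ⟨a_i, a_j⟩ k(x_i, h⁻¹·x_j) for h ∈ G. Then the identity element is a global maximum of F: F(e) ≥ 0 and |F(h)| ≤ F(e) for all h ∈ G. (When the moving cloud equals the fixed cloud, the identity maximizes the RKHS inner product ⟨f_X, h.f_X⟩.) -/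
/-- Let a group `G` act on `M`, and let `k` be a symmetric,
labeled-positive-semidefinite kernel invariant under the action.  For a finite labeled family
`(xᵢ, aᵢ)` define `F(h) = Σ_{i,j} ⟨aᵢ,aⱼ⟩ k(xᵢ, h⁻¹·xⱼ)`.  Then the identity is a global
maximum of `F`: `F(e) ≥ 0` and `|F(h)| ≤ F(e)` for all `h ∈ G`. -/
theorem identity_global_maximum_of_invariant_kernel
    {M : Type} (G : Type) [Group G] [MulAction G M]
    (I : Type) [NormedAddCommGroup I] [InnerProductSpace ℝ I]
    (k : M → M → ℝ) (hsymm : ∀ x y, k x y = k y x) (hpsd : LabeledPSD I k)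
    (hinv : ∀ (g : G) (x y : M), k (g • x) (g • y) = k x y)
    (ι : Type) [Fintype ι] (x : ι → M) (a : ι → I) :
    (0 ≤ ∑ i : ι, ∑ j : ι, (inner ℝ (a i) (a j) : ℝ) * k (x i) (((1 : G)⁻¹) • x j)) ∧
      ∀ h : G,
        |∑ i : ι, ∑ j : ι, (inner ℝ (a i) (a j) : ℝ) * k (x i) (h⁻¹ • x j)| ≤
          ∑ i : ι, ∑ j : ι, (inner ℝ (a i) (a j) : ℝ) * k (x i) (((1 : G)⁻¹) • x j) := by

  classical
  have h0' : 0 ≤ ∑ i : ι, ∑ j : ι, (inner ℝ (a i) (a j) : ℝ) * k (x i) (((1 : G)⁻¹) • x j) := by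
    simpa [inv_one, one_smul] using hpsd ι inferInstance x a
  refine ⟨h0', fun h => ?_⟩
  set A : ℝ := ∑ i : ι, ∑ j : ι, (inner ℝ (a i) (a j) : ℝ) * k (x i) (((1 : G)⁻¹) • x j)
    with hA
  set B : ℝ := ∑ i : ι, ∑ j : ι, (inner ℝ (a i) (a j) : ℝ) * k (x i) (h⁻¹ • x j) with hB
  have key : ∀ t : ℝ, 0 ≤ (1 + t ^ 2) * A + 2 * t * B := by
    intro t
    have hp := hpsd (ι ⊕ ι) inferInstance (Sum.elim x (fun j => h⁻¹ • x j))
      (Sum.elim a (fun j => t • a j))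
    simp only [Fintype.sum_sum_type, Sum.elim_inl, Sum.elim_inr] at hp
    have e11 : ∑ i : ι, ∑ j : ι, (inner ℝ (a i) (a j) : ℝ) * k (x i) (x j) = A := by
      simp [hA, inv_one, one_smul]
    have e12 : ∑ i : ι, ∑ j : ι, (inner ℝ (a i) (t • a j) : ℝ) * k (x i) (h⁻¹ • x j)
        = t * B := by
      rw [hB, Finset.mul_sum]
      refine Finset.sum_congr rfl fun i _ => ?_
      rw [Finset.mul_sum]
      refine Finset.sum_congr rfl fun j _ => ?_
      rw [real_inner_smul_right]; ring
    have e21 : ∑ i : ι, ∑ j : ι, (inner ℝ (t • a i) (a j) : ℝ) * k (h⁻¹ • x i) (x j)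
        = t * B := by
      rw [hB, Finset.mul_sum, Finset.sum_comm]
      refine Finset.sum_congr rfl fun i _ => ?_
      rw [Finset.mul_sum]
      refine Finset.sum_congr rfl fun j _ => ?_
      rw [real_inner_smul_left, real_inner_comm, hsymm]; ring
    have e22 : ∑ i : ι, ∑ j : ι, (inner ℝ (t • a i) (t • a j) : ℝ) * k (h⁻¹ • x i) (h⁻¹ • x j)
        = t ^ 2 * A := by
      rw [hA, Finset.mul_sum]
      refine Finset.sum_congr rfl fun i _ => ?_
      rw [Finset.mul_sum]
      refine Finset.sum_congr rfl fun j _ => ?_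
      rw [real_inner_smul_left, real_inner_smul_right, hinv h⁻¹, inv_one, one_smul]; ring
    have expand : ∑ i : ι, (∑ j : ι, (inner ℝ (a i) (a j) : ℝ) * k (x i) (x j)
          + ∑ j : ι, (inner ℝ (a i) (t • a j) : ℝ) * k (x i) (h⁻¹ • x j))
        + ∑ i : ι, (∑ j : ι, (inner ℝ (t • a i) (a j) : ℝ) * k (h⁻¹ • x i) (x j)
          + ∑ j : ι, (inner ℝ (t • a i) (t • a j) : ℝ) * k (h⁻¹ • x i) (h⁻¹ • x j))
        = (1 + t ^ 2) * A + 2 * t * B := by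
      rw [Finset.sum_add_distrib, Finset.sum_add_distrib, e11, e12, e21, e22]; ring
    calc (0:ℝ) ≤ _ := hp
      _ = (1 + t ^ 2) * A + 2 * t * B := expand
  have k1 := key 1
  have k2 := key (-1)
  rw [abs_le]
  constructor <;> nlinarith
end

section
/- Let M be a metric space, g : ℝ → ℝ a function, and k(x,y) = g(d(x,y)) a stationary kernel that is symmetric and labeled-positive-semidefinite with respect to labels in a real inner product space I. Let φ : M → M be a bijective isometry (d(φ(x), φ(y)) = d(x, y) for all x, y). Given a finite family (x_i, a_i)_{i∈ι} in M × I, it holds that |Σ_{i,j} ⟨a_i, a_j⟩ k(x_i, φ⁻¹(x_j))| ≤ Σ_{i,j} ⟨a_i, a_j⟩ k(x_i, x_j), and the right-hand side is nonnegative. (For a stationary kernel and a group acting isometrically, the identity is a global maximum of F.) -/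
/-- Let `k(x,y) = g(d(x,y))` be a stationary kernel on a metric space `M`,
symmetric and labeled-positive-semidefinite, and let `φ : M ≃ M` be a bijective isometry.
Then for any finite labeled family `(xᵢ, aᵢ)`,
`|Σ_{i,j} ⟨aᵢ,aⱼ⟩ k(xᵢ, φ⁻¹(xⱼ))| ≤ Σ_{i,j} ⟨aᵢ,aⱼ⟩ k(xᵢ, xⱼ)`, and the right-hand side is
nonnegative (for a stationary kernel and an isometric action, the identity is a global
maximum of `F`). -/
theorem identity_global_maximum_of_stationary_kernel
    {M : Type} [MetricSpace M] (g : ℝ → ℝ)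
    (I : Type) [NormedAddCommGroup I] [InnerProductSpace ℝ I]
    (k : M → M → ℝ) (hk : ∀ x y, k x y = g (dist x y))
    (hsymm : ∀ x y, k x y = k y x) (hpsd : LabeledPSD I k)
    (φ : M ≃ M) (hφ : ∀ x y, dist (φ x) (φ y) = dist x y)
    (ι : Type) [Fintype ι] (x : ι → M) (a : ι → I) :
    |∑ i : ι, ∑ j : ι, (inner ℝ (a i) (a j) : ℝ) * k (x i) (φ.symm (x j))| ≤
        (∑ i : ι, ∑ j : ι, (inner ℝ (a i) (a j) : ℝ) * k (x i) (x j)) ∧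
      0 ≤ ∑ i : ι, ∑ j : ι, (inner ℝ (a i) (a j) : ℝ) * k (x i) (x j) := by
  have hS : 0 ≤ ∑ i : ι, ∑ j : ι, (inner ℝ (a i) (a j) : ℝ) * k (x i) (x j) :=
    hpsd ι inferInstance x a
  have hinv : ∀ u v : M, k (φ.symm u) (φ.symm v) = k u v := by
    intro u v
    rw [hk, hk, ← hφ (φ.symm u) (φ.symm v), φ.apply_symm_apply, φ.apply_symm_apply]
  have hcross : (∑ i : ι, ∑ j : ι, (inner ℝ (a i) (a j) : ℝ) * k (φ.symm (x i)) (x j))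
      = ∑ i : ι, ∑ j : ι, (inner ℝ (a i) (a j) : ℝ) * k (x i) (φ.symm (x j)) := by
    rw [Finset.sum_comm]
    exact Finset.sum_congr rfl fun i _ => Finset.sum_congr rfl fun j _ => by
      rw [hsymm, real_inner_comm]
  have key : ∀ b : ι → I, (∀ i, b i = a i ∨ b i = -a i) → True := fun _ _ => trivial
  have h1 := hpsd (ι ⊕ ι) inferInstance (Sum.elim x (fun i => φ.symm (x i))) (Sum.elim a a)
  have h2 := hpsd (ι ⊕ ι) inferInstance (Sum.elim x (fun i => φ.symm (x i)))
      (Sum.elim a (fun i => -a i))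
  simp only [Fintype.sum_sum_type, Sum.elim_inl, Sum.elim_inr, inner_neg_neg, inner_neg_left,
    inner_neg_right, neg_mul, neg_neg, hinv, Finset.sum_add_distrib,
    Finset.sum_neg_distrib] at h1 h2
  rw [hcross] at h1 h2
  constructor
  · rw [abs_le]
    constructor <;> linarith
  · exact hS
end

section
/- Let σ, ℓ > 0 and let k(x,y) = σ²·exp(−‖x−y‖²/(2ℓ²)) be the squared exponential kernel on ℝⁿ. Let I be a real inner product space and (x_i, a_i)_{i∈ι} a finite family in ℝⁿ × I. Then for every R ∈ ℝⁿˣⁿ with RᵀR = I and every T ∈ ℝⁿ, |Σ_{i,j} ⟨a_i, a_j⟩ k(x_i, Rᵀx_j − RᵀT)| ≤ Σ_{i,j} ⟨a_i, a_j⟩ k(x_i, x_j), and the right-hand side is nonnegative. (The identity is a global maximum of the alignment functional F over SE(n) when the two point clouds coincide.) -/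
open Matrix

lemma psd_pow {κ : Type} [Fintype κ] {n : ℕ} (m : ℕ) (u : κ → Fin n → ℝ) (c : κ → ℝ) :
    0 ≤ ∑ i : κ, ∑ j : κ, c i * c j * (∑ k, u i k * u j k) ^ m := by
  have h : ∀ i j : κ, c i * c j * (∑ k, u i k * u j k) ^ m
      = ∑ p : Fin m → Fin n, (c i * ∏ t, u i (p t)) * (c j * ∏ t, u j (p t)) := by
    intro i j
    rw [Fintype.sum_pow, Finset.mul_sum]
    congr 1; ext p
    rw [Finset.prod_mul_distrib]; ring
  calc (0:ℝ) ≤ ∑ p : Fin m → Fin n, (∑ i : κ, c i * ∏ t, u i (p t)) ^ 2 :=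
        Finset.sum_nonneg fun _ _ => sq_nonneg _
    _ = ∑ i : κ, ∑ j : κ, c i * c j * (∑ k, u i k * u j k) ^ m := by
        simp_rw [h, sq, Finset.sum_mul_sum]
        rw [Finset.sum_comm]
        exact Finset.sum_congr rfl fun y _ => Finset.sum_comm

lemma psd_exp {κ : Type} [Fintype κ] {n : ℕ} (u : κ → Fin n → ℝ) (c : κ → ℝ) :
    0 ≤ ∑ i : κ, ∑ j : κ, c i * c j * Real.exp (∑ k, u i k * u j k) := by
  have hexp : ∀ y : ℝ, Real.exp y = ∑' m : ℕ, y ^ m / m.factorial := by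
    intro y
    rw [Real.exp_eq_exp_ℝ, NormedSpace.exp_eq_tsum_div]
  have hsummable : ∀ i j : κ, Summable (fun m : ℕ =>
      c i * c j * ((∑ k, u i k * u j k) ^ m / m.factorial)) :=
    fun i j => (Real.summable_pow_div_factorial _).mul_left _
  calc (0:ℝ) ≤ ∑' m : ℕ, ∑ i : κ, ∑ j : κ,
        c i * c j * ((∑ k, u i k * u j k) ^ m / m.factorial) := by
        refine tsum_nonneg fun m => ?_
        have := psd_pow m u c
        have h2 : ∀ i j : κ, c i * c j * ((∑ k, u i k * u j k) ^ m / m.factorial)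
            = (c i * c j * (∑ k, u i k * u j k) ^ m) / m.factorial := by intro i j; ring
        simp_rw [h2, ← Finset.sum_div]
        positivity
    _ = ∑ i : κ, ∑ j : κ, c i * c j * Real.exp (∑ k, u i k * u j k) := by
        rw [Summable.tsum_finsetSum (fun i _ => summable_sum (fun j _ => hsummable i j))]
        refine Finset.sum_congr rfl fun i _ => ?_
        rw [Summable.tsum_finsetSum (fun j _ => hsummable i j)]
        refine Finset.sum_congr rfl fun j _ => ?_
        rw [hexp, ← tsum_mul_left]

lemma psd_gauss_scalar {κ : Type} [Fintype κ] {n : ℕ} (σ ℓ : ℝ) (hℓ : 0 < ℓ)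
    (x : κ → EuclideanSpace ℝ (Fin n)) (c : κ → ℝ) :
    0 ≤ ∑ i : κ, ∑ j : κ, c i * c j *
      (σ ^ 2 * Real.exp (-‖x i - x j‖ ^ 2 / (2 * ℓ ^ 2))) := by
  set d : κ → ℝ := fun i => c i * σ * Real.exp (-‖x i‖ ^ 2 / (2 * ℓ ^ 2)) with hd
  set u : κ → Fin n → ℝ := fun i k => x i k / ℓ with hu
  have key : ∀ i j : κ, c i * c j * (σ ^ 2 * Real.exp (-‖x i - x j‖ ^ 2 / (2 * ℓ ^ 2)))
      = d i * d j * Real.exp (∑ k, u i k * u j k) := by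
    intro i j
    have hinner : (∑ k, u i k * u j k) = (inner ℝ (x i) (x j) : ℝ) / ℓ ^ 2 := by
      rw [PiLp.inner_apply]
      rw [Finset.sum_div]
      refine Finset.sum_congr rfl fun k _ => ?_
      simp only [hu, RCLike.inner_apply, conj_trivial]
      field_simp
    have hnorm : -‖x i - x j‖ ^ 2 / (2 * ℓ ^ 2)
        = -‖x i‖ ^ 2 / (2 * ℓ ^ 2) + -‖x j‖ ^ 2 / (2 * ℓ ^ 2)
          + (inner ℝ (x i) (x j) : ℝ) / ℓ ^ 2 := by
      rw [@norm_sub_sq_real ]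
      field_simp
      ring
    rw [hinner, hd]
    simp only []
    rw [hnorm, Real.exp_add, Real.exp_add]
    ring
  simp_rw [key]
  exact psd_exp u d

lemma psd_gauss_vector {κ : Type} [Fintype κ] {n : ℕ} (σ ℓ : ℝ) (hℓ : 0 < ℓ)
    (I : Type) [NormedAddCommGroup I] [InnerProductSpace ℝ I]
    (x : κ → EuclideanSpace ℝ (Fin n)) (a : κ → I) :
    0 ≤ ∑ i : κ, ∑ j : κ, (inner ℝ (a i) (a j) : ℝ) *
      (σ ^ 2 * Real.exp (-‖x i - x j‖ ^ 2 / (2 * ℓ ^ 2))) := by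
  set S := Submodule.span ℝ (Set.range a) with hS
  haveI : FiniteDimensional ℝ S :=
    FiniteDimensional.span_of_finite ℝ (Set.finite_range a)
  set b := stdOrthonormalBasis ℝ S with hb
  set a' : κ → S := fun i => ⟨a i, Submodule.subset_span (Set.mem_range_self i)⟩ with ha'
  have hinner : ∀ i j : κ, (inner ℝ (a i) (a j) : ℝ)
      = ∑ t, (inner ℝ (b t) (a' i) : ℝ) * (inner ℝ (b t) (a' j) : ℝ) := by
    intro i j
    have := b.sum_inner_mul_inner (a' i) (a' j)
    have hc : (inner ℝ (a i) (a j) : ℝ) = (inner ℝ (a' i) (a' j) : ℝ) := rfl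
    rw [hc, ← this]
    refine Finset.sum_congr rfl fun t _ => ?_
    rw [real_inner_comm (a' i) (b t)]
  have key : (∑ i : κ, ∑ j : κ, (inner ℝ (a i) (a j) : ℝ) *
        (σ ^ 2 * Real.exp (-‖x i - x j‖ ^ 2 / (2 * ℓ ^ 2))))
      = ∑ t, ∑ i : κ, ∑ j : κ,
          (inner ℝ (b t) (a' i) : ℝ) * (inner ℝ (b t) (a' j) : ℝ) *
          (σ ^ 2 * Real.exp (-‖x i - x j‖ ^ 2 / (2 * ℓ ^ 2))) := by
    simp_rw [hinner, Finset.sum_mul]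
    exact (Finset.sum_congr rfl fun i _ => Finset.sum_comm).trans Finset.sum_comm
  rw [key]
  refine Finset.sum_nonneg fun t _ => ?_
  exact psd_gauss_scalar σ ℓ hℓ x (fun i => (inner ℝ (b t) (a' i) : ℝ))

/-- For the squared exponential kernel `k(x,y) = σ²·exp(−‖x−y‖²/(2ℓ²))` on `ℝⁿ`
and any finite labeled family `(xᵢ, aᵢ)`, for every `R` with `RᵀR = I` and every `T ∈ ℝⁿ`,
`|Σ_{i,j} ⟨aᵢ,aⱼ⟩ k(xᵢ, Rᵀxⱼ − RᵀT)| ≤ Σ_{i,j} ⟨aᵢ,aⱼ⟩ k(xᵢ, xⱼ)`, and the right-hand side is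
nonnegative (the identity is a global maximum of the alignment functional over `SE(n)` when the
two point clouds coincide). -/
theorem identity_global_maximum_SEn_squared_exponential
    (n : ℕ) (σ ℓ : ℝ) (hσ : 0 < σ) (hℓ : 0 < ℓ)
    (I : Type) [NormedAddCommGroup I] [InnerProductSpace ℝ I]
    (ι : Type) [Fintype ι] (x : ι → EuclideanSpace ℝ (Fin n)) (a : ι → I)
    (R : Matrix (Fin n) (Fin n) ℝ) (hR : Rᵀ * R = 1) (T : EuclideanSpace ℝ (Fin n)) :
    |∑ i : ι, ∑ j : ι, (inner ℝ (a i) (a j) : ℝ) *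
        (σ ^ 2 * Real.exp
          (-‖x i - (toEuc (Rᵀ.mulVec (x j)) - toEuc (Rᵀ.mulVec T))‖ ^ 2 / (2 * ℓ ^ 2)))| ≤
        (∑ i : ι, ∑ j : ι, (inner ℝ (a i) (a j) : ℝ) *
          (σ ^ 2 * Real.exp (-‖x i - x j‖ ^ 2 / (2 * ℓ ^ 2)))) ∧
      0 ≤ ∑ i : ι, ∑ j : ι, (inner ℝ (a i) (a j) : ℝ) *
        (σ ^ 2 * Real.exp (-‖x i - x j‖ ^ 2 / (2 * ℓ ^ 2))) := by
  classical
  set y : ι → EuclideanSpace ℝ (Fin n) :=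
    fun j => toEuc (Rᵀ.mulVec (x j)) - toEuc (Rᵀ.mulVec T) with hy
  have hRRT : R * Rᵀ = 1 := mul_eq_one_comm.mp hR
  have hpres : ∀ v : Fin n → ℝ, ‖toEuc (Rᵀ.mulVec v)‖ = ‖toEuc v‖ := by
    intro v
    have hdot : (Rᵀ.mulVec v) ⬝ᵥ (Rᵀ.mulVec v) = v ⬝ᵥ v := by
      rw [Matrix.dotProduct_mulVec, Matrix.mulVec_transpose, Matrix.vecMul_vecMul,
        hRRT, Matrix.vecMul_one]
    have h1 : ∀ w : Fin n → ℝ, ‖toEuc w‖ = Real.sqrt (w ⬝ᵥ w) := by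
      intro w
      rw [EuclideanSpace.norm_eq]
      congr 1
      refine Finset.sum_congr rfl fun k _ => ?_
      simp [toEuc, dotProduct, Real.norm_eq_abs, sq_abs, sq]
    rw [h1, h1, hdot]
  have hyy : ∀ i j : ι, ‖y i - y j‖ = ‖x i - x j‖ := by
    intro i j
    have h1 : y i - y j = toEuc (Rᵀ.mulVec ((x i : Fin n → ℝ) - (x j : Fin n → ℝ))) := by
      simp only [hy]
      rw [sub_sub_sub_cancel_right]
      show toEuc (Rᵀ.mulVec (x i)) - toEuc (Rᵀ.mulVec (x j)) = _
      rw [Matrix.mulVec_sub]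
      rfl
    rw [h1, hpres]
    rfl
  have hsym : ∀ i j : ι, ‖y i - x j‖ = ‖x j - y i‖ := fun i j => norm_sub_rev _ _
  set Q := ∑ i : ι, ∑ j : ι, (inner ℝ (a i) (a j) : ℝ) *
      (σ ^ 2 * Real.exp (-‖x i - x j‖ ^ 2 / (2 * ℓ ^ 2))) with hQdef
  set M := ∑ i : ι, ∑ j : ι, (inner ℝ (a i) (a j) : ℝ) *
      (σ ^ 2 * Real.exp (-‖x i - y j‖ ^ 2 / (2 * ℓ ^ 2))) with hMdef
  have hQ : 0 ≤ Q := psd_gauss_vector σ ℓ hℓ I x a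
  have base : ∀ ε : ℝ, 0 ≤ Q + ε * M + (ε * M + ε * (ε * Q)) := by
    intro ε
    have h := psd_gauss_vector σ ℓ hℓ I (Sum.elim x y) (Sum.elim a (fun i => ε • a i))
    have expand : (∑ p : ι ⊕ ι, ∑ q : ι ⊕ ι,
        (inner ℝ (Sum.elim a (fun i => ε • a i) p) (Sum.elim a (fun i => ε • a i) q) : ℝ) *
        (σ ^ 2 * Real.exp (-‖Sum.elim x y p - Sum.elim x y q‖ ^ 2 / (2 * ℓ ^ 2))))
        = Q + ε * M + (ε * M + ε * (ε * Q)) := by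
      simp only [Fintype.sum_sum_type, Sum.elim_inl, Sum.elim_inr,
        real_inner_smul_left, real_inner_smul_right]
      rw [Finset.sum_add_distrib, Finset.sum_add_distrib]
      have t2 : (∑ i : ι, ∑ j : ι, ε * (inner ℝ (a i) (a j) : ℝ) *
          (σ ^ 2 * Real.exp (-‖x i - y j‖ ^ 2 / (2 * ℓ ^ 2)))) = ε * M := by
        rw [hMdef, Finset.mul_sum]
        refine Finset.sum_congr rfl fun i _ => ?_
        rw [Finset.mul_sum]
        exact Finset.sum_congr rfl fun j _ => by ring
      have t3 : (∑ i : ι, ∑ j : ι, ε * (inner ℝ (a i) (a j) : ℝ) *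
          (σ ^ 2 * Real.exp (-‖y i - x j‖ ^ 2 / (2 * ℓ ^ 2)))) = ε * M := by
        simp_rw [hsym]
        rw [Finset.sum_comm]
        rw [hMdef, Finset.mul_sum]
        refine Finset.sum_congr rfl fun i _ => ?_
        rw [Finset.mul_sum]
        refine Finset.sum_congr rfl fun j _ => ?_
        rw [real_inner_comm (a j) (a i)]
        ring
      have t4 : (∑ i : ι, ∑ j : ι, ε * (ε * (inner ℝ (a i) (a j) : ℝ)) *
          (σ ^ 2 * Real.exp (-‖y i - y j‖ ^ 2 / (2 * ℓ ^ 2)))) = ε * (ε * Q) := by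
        simp_rw [hyy]
        have hpt : ∀ i j : ι, ε * (ε * (inner ℝ (a i) (a j) : ℝ)) *
            (σ ^ 2 * Real.exp (-‖x i - x j‖ ^ 2 / (2 * ℓ ^ 2)))
            = ε * (ε * ((inner ℝ (a i) (a j) : ℝ) *
              (σ ^ 2 * Real.exp (-‖x i - x j‖ ^ 2 / (2 * ℓ ^ 2))))) := fun i j => by ring
        simp_rw [hpt, ← Finset.mul_sum]
        rw [hQdef]
      rw [t2, t3, t4, hQdef]
    rw [expand] at h
    exact h
  have h1 := base 1
  have h2 := base (-1)
  refine ⟨abs_le.mpr ⟨by linarith, by linarith⟩, hQ⟩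
end

section
/- For any ℓ > 0, any real inner product space I, and any finite family (x_i, a_i)_{i∈ι} in ℝⁿ × I, one has Σ_{i,j} ⟨a_i, a_j⟩ exp(−‖x_i − x_j‖²/(2ℓ²)) ≥ 0. (The squared exponential kernel is labeled-positive-semidefinite with respect to labels in any real inner product space.) -/
open Finset Nat

private lemma rank_one_nonneg {I : Type} [NormedAddCommGroup I] [InnerProductSpace ℝ I]
    {ι : Type} [Fintype ι] (b : ι → I) (c : ι → ℝ) :
    0 ≤ ∑ i : ι, ∑ j : ι, (inner ℝ (b i) (b j) : ℝ) * (c i * c j) := by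
  have h : (inner ℝ (∑ i : ι, c i • b i) (∑ j : ι, c j • b j) : ℝ)
      = ∑ i : ι, ∑ j : ι, (inner ℝ (b i) (b j) : ℝ) * (c i * c j) := by
    rw [sum_inner]
    refine Finset.sum_congr rfl fun i _ => ?_
    rw [inner_sum]
    refine Finset.sum_congr rfl fun j _ => ?_
    rw [real_inner_smul_left, real_inner_smul_right]; ring
  rw [← h]
  exact real_inner_self_nonneg

private lemma pow_gram_nonneg {n : ℕ} {I : Type} [NormedAddCommGroup I] [InnerProductSpace ℝ I]
    {ι : Type} [Fintype ι] (b : ι → I) (y : ι → EuclideanSpace ℝ (Fin n)) (k : ℕ) :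
    0 ≤ ∑ i : ι, ∑ j : ι, (inner ℝ (b i) (b j) : ℝ) * (inner ℝ (y i) (y j) : ℝ) ^ k := by
  have hinner : ∀ i j : ι, (inner ℝ (y i) (y j) : ℝ) = ∑ d : Fin n, y i d * y j d := by
    intro i j
    simp [PiLp.inner_apply, RCLike.inner_apply, conj_trivial, mul_comm]
  have key : ∀ i j : ι, (inner ℝ (y i) (y j) : ℝ) ^ k
      = ∑ p : Fin k → Fin n, (∏ t, y i (p t)) * (∏ t, y j (p t)) := by
    intro i j
    rw [hinner, Fintype.sum_pow]
    exact Finset.sum_congr rfl fun p _ => by rw [Finset.prod_mul_distrib]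
  calc (0:ℝ) ≤ ∑ p : Fin k → Fin n, ∑ i : ι, ∑ j : ι,
        (inner ℝ (b i) (b j) : ℝ) * ((∏ t, y i (p t)) * (∏ t, y j (p t))) := by
        exact Finset.sum_nonneg fun p _ => rank_one_nonneg b fun i => ∏ t, y i (p t)
    _ = ∑ i : ι, ∑ j : ι, (inner ℝ (b i) (b j) : ℝ) * (inner ℝ (y i) (y j) : ℝ) ^ k := by
        rw [Finset.sum_comm]
        refine Finset.sum_congr rfl fun i _ => ?_
        rw [Finset.sum_comm]
        refine Finset.sum_congr rfl fun j _ => ?_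
        rw [key, Finset.mul_sum]

private lemma exp_gram_nonneg {n : ℕ} {I : Type} [NormedAddCommGroup I] [InnerProductSpace ℝ I]
    {ι : Type} [Fintype ι] (b : ι → I) (y : ι → EuclideanSpace ℝ (Fin n)) :
    0 ≤ ∑ i : ι, ∑ j : ι, (inner ℝ (b i) (b j) : ℝ) * Real.exp (inner ℝ (y i) (y j)) := by
  have hexp : ∀ t : ℝ, Real.exp t = ∑' k : ℕ, t ^ k / k ! := by
    intro t
    rw [Real.exp_eq_exp_ℝ, NormedSpace.exp_eq_tsum_div]
  have hsummable : ∀ i j : ι, Summable fun k : ℕ =>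
      (inner ℝ (b i) (b j) : ℝ) * ((inner ℝ (y i) (y j) : ℝ) ^ k / k !) :=
    fun i j => (Real.summable_pow_div_factorial _).mul_left _
  have hrw : ∑ i : ι, ∑ j : ι, (inner ℝ (b i) (b j) : ℝ) * Real.exp (inner ℝ (y i) (y j))
      = ∑' k : ℕ, ∑ i : ι, ∑ j : ι,
        (inner ℝ (b i) (b j) : ℝ) * ((inner ℝ (y i) (y j) : ℝ) ^ k / k !) := by
    calc ∑ i : ι, ∑ j : ι, (inner ℝ (b i) (b j) : ℝ) * Real.exp (inner ℝ (y i) (y j))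
        = ∑ i : ι, ∑ j : ι, ∑' k : ℕ,
            (inner ℝ (b i) (b j) : ℝ) * ((inner ℝ (y i) (y j) : ℝ) ^ k / k !) := by
          refine Finset.sum_congr rfl fun i _ => Finset.sum_congr rfl fun j _ => ?_
          rw [hexp, tsum_mul_left]
      _ = ∑ i : ι, ∑' k : ℕ, ∑ j : ι,
            (inner ℝ (b i) (b j) : ℝ) * ((inner ℝ (y i) (y j) : ℝ) ^ k / k !) :=
          Finset.sum_congr rfl fun i _ => (Summable.tsum_finsetSum fun j _ => hsummable i j).symm
      _ = ∑' k : ℕ, ∑ i : ι, ∑ j : ι,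
            (inner ℝ (b i) (b j) : ℝ) * ((inner ℝ (y i) (y j) : ℝ) ^ k / k !) :=
          (Summable.tsum_finsetSum fun i _ => summable_sum fun j _ => hsummable i j).symm
  rw [hrw]
  refine tsum_nonneg fun k => ?_
  have : ∑ i : ι, ∑ j : ι, (inner ℝ (b i) (b j) : ℝ) * ((inner ℝ (y i) (y j) : ℝ) ^ k / k !)
      = (∑ i : ι, ∑ j : ι, (inner ℝ (b i) (b j) : ℝ) * (inner ℝ (y i) (y j) : ℝ) ^ k) / k ! := by
    rw [Finset.sum_div]
    exact Finset.sum_congr rfl fun i _ => by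
      rw [Finset.sum_div]
      exact Finset.sum_congr rfl fun j _ => by rw [mul_div_assoc]
  rw [this]
  exact div_nonneg (pow_gram_nonneg b y k) (by positivity)

/-- The squared exponential kernel is labeled-positive-semidefinite with
respect to labels in any real inner product space: for any `ℓ > 0` and any finite family
`(xᵢ, aᵢ)` in `ℝⁿ × I`, `Σ_{i,j} ⟨aᵢ, aⱼ⟩ exp(−‖xᵢ − xⱼ‖²/(2ℓ²)) ≥ 0`. -/
theorem squared_exponential_kernel_labeled_posSemidef
    (n : ℕ) (ℓ : ℝ) (hℓ : 0 < ℓ)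
    (I : Type) [NormedAddCommGroup I] [InnerProductSpace ℝ I]
    (ι : Type) [Fintype ι] (x : ι → EuclideanSpace ℝ (Fin n)) (a : ι → I) :
    0 ≤ ∑ i : ι, ∑ j : ι,
      (inner ℝ (a i) (a j) : ℝ) * Real.exp (-‖x i - x j‖ ^ 2 / (2 * ℓ ^ 2)) := by
  have hℓ0 : ℓ ≠ 0 := ne_of_gt hℓ
  set y : ι → EuclideanSpace ℝ (Fin n) := fun i => ℓ⁻¹ • x i with hy
  set c : ι → ℝ := fun i => Real.exp (-‖x i‖ ^ 2 / (2 * ℓ ^ 2)) with hc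
  set b : ι → I := fun i => c i • a i with hb
  have hkernel : ∀ i j : ι, Real.exp (-‖x i - x j‖ ^ 2 / (2 * ℓ ^ 2))
      = c i * (c j * Real.exp (inner ℝ (y i) (y j))) := by
    intro i j
    rw [hc, ← Real.exp_add, ← Real.exp_add]
    congr 1
    have hin : (inner ℝ (y i) (y j) : ℝ) = ℓ⁻¹ * (ℓ⁻¹ * (inner ℝ (x i) (x j) : ℝ)) := by
      rw [hy]; rw [real_inner_smul_left, real_inner_smul_right]
    rw [hin, @norm_sub_sq_real _ _ _ (x i) (x j)]
    field_simp
    ring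
  have hlabel : ∀ i j : ι, (inner ℝ (a i) (a j) : ℝ) * (c i * (c j * Real.exp (inner ℝ (y i) (y j))))
      = (inner ℝ (b i) (b j) : ℝ) * Real.exp (inner ℝ (y i) (y j)) := by
    intro i j
    rw [hb]
    simp only [real_inner_smul_left, real_inner_smul_right]
    ring
  calc (0:ℝ) ≤ ∑ i : ι, ∑ j : ι, (inner ℝ (b i) (b j) : ℝ) * Real.exp (inner ℝ (y i) (y j)) :=
        exp_gram_nonneg b y
    _ = ∑ i : ι, ∑ j : ι, (inner ℝ (a i) (a j) : ℝ) * Real.exp (-‖x i - x j‖ ^ 2 / (2 * ℓ ^ 2)) := by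
        refine Finset.sum_congr rfl fun i _ => Finset.sum_congr rfl fun j _ => ?_
        rw [hkernel, hlabel]
end

section
/- Let M be a set, I a real inner product space, and k : M × M → ℝ a symmetric, labeled-positive-semidefinite kernel. Let (x_i, a_i)_{i∈ι} and (z_j, b_j)_{j∈κ} be finite families in M × I, and for a map φ : M → M write F(φ) = Σ_{i,j} ⟨a_i, b_j⟩ k(x_i, φ(z_j)), ‖f_X‖² = Σ_{i,i′} ⟨a_i, a_{i′}⟩ k(x_i, x_{i′}), and ‖φ.f_Z‖² = Σ_{j,j′} ⟨b_j, b_{j′}⟩ k(φ(z_j), φ(z_{j′})). Suppose φ* : M → M satisfies: (i) F(φ*) ≥ F(id) ≥ 0, (ii) ‖φ*.f_Z‖² ≤ ‖id.f_Z‖², and (iii) ‖f_X‖ > 0, ‖φ*.f_Z‖ > 0, ‖id.f_Z‖ > 0. Then 0 ≤ F(id)/(‖f_X‖·‖id.f_Z‖) ≤ F(φ*)/(‖f_X‖·‖φ*.f_Z‖) ≤ 1. (The maximizer of the alignment functional minimizes the angle between f_X and f_Z.) -/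
/-- The maximizer of the alignment functional minimizes the angle between
`f_X` and `f_Z`: writing `F(φ) = Σ_{i,j} ⟨aᵢ,bⱼ⟩ k(xᵢ, φ(zⱼ))`,
`‖f_X‖² = Σ_{i,i′} ⟨aᵢ,aᵢ′⟩ k(xᵢ,xᵢ′)` and `‖φ.f_Z‖² = Σ_{j,j′} ⟨bⱼ,bⱼ′⟩ k(φ(zⱼ),φ(zⱼ′))`,
if `φ*` satisfies `F(φ*) ≥ F(id) ≥ 0`, `‖φ*.f_Z‖² ≤ ‖id.f_Z‖²` and all three norms are
positive, then `0 ≤ F(id)/(‖f_X‖·‖id.f_Z‖) ≤ F(φ*)/(‖f_X‖·‖φ*.f_Z‖) ≤ 1`. -/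
theorem maximizer_minimizes_angle
    {M : Type} (I : Type) [NormedAddCommGroup I] [InnerProductSpace ℝ I]
    (k : M → M → ℝ) (hsymm : ∀ x y, k x y = k y x) (hpsd : LabeledPSD I k)
    (ι κ : Type) [Fintype ι] [Fintype κ]
    (x : ι → M) (a : ι → I) (z : κ → M) (b : κ → I)
    (φstar : M → M)
    -- abbreviations (introduced as equalities, so the statement stays faithful)
    (F : (M → M) → ℝ)
    (hF : ∀ φ : M → M, F φ = ∑ i : ι, ∑ j : κ, (inner ℝ (a i) (b j) : ℝ) * k (x i) (φ (z j)))
    (normfX : ℝ) (hnormfX : normfX ^ 2 = ∑ i : ι, ∑ i' : ι,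
      (inner ℝ (a i) (a i') : ℝ) * k (x i) (x i'))
    (normfZ : (M → M) → ℝ)
    (hnormfZ : ∀ φ : M → M, (normfZ φ) ^ 2 = ∑ j : κ, ∑ j' : κ,
      (inner ℝ (b j) (b j') : ℝ) * k (φ (z j)) (φ (z j')))
    -- hypotheses (i)–(iii)
    (h1 : F φstar ≥ F id) (h1' : F id ≥ 0)
    (h2 : (normfZ φstar) ^ 2 ≤ (normfZ id) ^ 2)
    (h3 : 0 < normfX) (h3' : 0 < normfZ φstar) (h3'' : 0 < normfZ id) :
    0 ≤ F id / (normfX * normfZ id) ∧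
      F id / (normfX * normfZ id) ≤ F φstar / (normfX * normfZ φstar) ∧
      F φstar / (normfX * normfZ φstar) ≤ 1 := by

  -- Cauchy–Schwarz via the PSD property
  have key : ∀ t : ℝ, 0 ≤ normfX ^ 2 + 2 * t * F φstar + t ^ 2 * (normfZ φstar) ^ 2 := by
    intro t
    have h := hpsd (ι ⊕ κ) inferInstance (Sum.elim x (fun j => φstar (z j)))
      (Sum.elim a (fun j => t • b j))
    simp only [Fintype.sum_sum_type, Sum.elim_inl, Sum.elim_inr, Finset.sum_add_distrib,
      real_inner_smul_left, real_inner_smul_right] at h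
    have e1 : ∑ j : κ, ∑ i : ι, t * (inner ℝ (b j) (a i) : ℝ) * k (φstar (z j)) (x i)
        = t * F φstar := by
      rw [Finset.sum_comm, hF, Finset.mul_sum]
      refine Finset.sum_congr rfl fun i _ => ?_
      rw [Finset.mul_sum]
      refine Finset.sum_congr rfl fun j _ => ?_
      rw [real_inner_comm, hsymm]; ring
    have e2 : ∑ i : ι, ∑ j : κ, t * (inner ℝ (a i) (b j) : ℝ) * k (x i) (φstar (z j))
        = t * F φstar := by
      rw [hF, Finset.mul_sum]
      refine Finset.sum_congr rfl fun i _ => ?_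
      rw [Finset.mul_sum]
      refine Finset.sum_congr rfl fun j _ => ?_
      ring
    have e3 : ∑ j : κ, ∑ j' : κ, t * (t * (inner ℝ (b j) (b j') : ℝ)) * k (φstar (z j)) (φstar (z j'))
        = t ^ 2 * (normfZ φstar) ^ 2 := by
      rw [hnormfZ, Finset.mul_sum]
      refine Finset.sum_congr rfl fun j _ => ?_
      rw [Finset.mul_sum]
      refine Finset.sum_congr rfl fun j' _ => ?_
      ring
    have e4 : ∑ i : ι, ∑ i' : ι, (inner ℝ (a i) (a i') : ℝ) * k (x i) (x i') = normfX ^ 2 :=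
      (hnormfX).symm
    rw [e1, e2, e3, e4] at h
    linarith
  have hCS : F φstar ≤ normfX * normfZ φstar := by
    have hk := key (-(F φstar) / (normfZ φstar) ^ 2)
    have hB : (0:ℝ) < (normfZ φstar) ^ 2 := by positivity
    have heq : normfX ^ 2 + 2 * (-(F φstar) / (normfZ φstar) ^ 2) * F φstar
        + (-(F φstar) / (normfZ φstar) ^ 2) ^ 2 * (normfZ φstar) ^ 2
        = normfX ^ 2 - (F φstar) ^ 2 / (normfZ φstar) ^ 2 := by
      field_simp; ring
    rw [heq, sub_nonneg, div_le_iff₀ hB] at hk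
    have hsq : (F φstar) ^ 2 ≤ normfX ^ 2 * (normfZ φstar) ^ 2 := hk
    nlinarith [mul_pos h3 h3']
  have hZ : normfZ φstar ≤ normfZ id := by nlinarith
  have hden : 0 < normfX * normfZ φstar := by positivity
  have hden' : 0 < normfX * normfZ id := by positivity
  refine ⟨div_nonneg h1' hden'.le, ?_, ?_⟩
  · apply div_le_div₀ (le_trans h1' h1) h1 hden
    exact mul_le_mul_of_nonneg_left hZ h3.le
  · rw [div_le_one hden]; exact hCS
end
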